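/- Let $\xi_1, \dots, \xi_n$ be independent nonnegative random variables with moments $m_{i,k} = \mathbf{E}[\xi_i^k]$ satisfying $m_{i,k} = \mathcal{O}(k^{a_i k})$ as $k \to \infty$ for positive constants $a_1, \dots, a_n$ with $\sum_{i=1}^n a_i \le 2$. Then the product $Z_n = \prod_{i=1}^n \xi_i$ satisfies $\mathbf{E}[Z_n^k] = \mathcal{O}(k^{2k})$ as $k \to \infty$, and hence $\sqrt{Z_n}$ has a moment generating function (Hardy's condition). -/

import Mathlib

open MeasureTheory Real ProbabilityTheory
open scoped Nat

lemma aux_prod_int {Ω : Type*} [MeasurableSpace Ω] (μ : Measure Ω) [IsProbabilityMeasure μ]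
    {n : ℕ} (g : Fin n → Ω → ℝ) (hmeas : ∀ i, Measurable (g i))
    (hindep : iIndepFun (m := fun _ => Real.measurableSpace) g μ)
    (hint : ∀ i, Integrable (g i) μ) (s : Finset (Fin n)) :
    Integrable (fun ω => ∏ i ∈ s, g i ω) μ ∧
      ∫ ω, ∏ i ∈ s, g i ω ∂μ = ∏ i ∈ s, ∫ ω, g i ω ∂μ := by
  classical
  induction s using Finset.cons_induction with
  | empty => simp
  | cons i s hi ih =>
    have hfun : (fun ω => ∏ j ∈ s, g j ω) = ∏ j ∈ s, g j := by
      ext ω; simp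
    have hIndep : IndepFun (∏ j ∈ s, g j) (g i) μ :=
      hindep.indepFun_finsetProd_of_notMem hmeas hi
    have hint_s : Integrable (∏ j ∈ s, g j) μ := hfun ▸ ih.1
    have hmul : Integrable ((∏ j ∈ s, g j) * g i) μ :=
      hIndep.integrable_mul hint_s (hint i)
    have hEq : (fun ω => ∏ j ∈ Finset.cons i s hi, g j ω) = (∏ j ∈ s, g j) * g i := by
      ext ω; simp [Finset.prod_insert hi, mul_comm]
    constructor
    · rw [hEq]; exact hmul
    · have h2 := hIndep.integral_mul_eq_mul_integral hint_s.aestronglyMeasurable (hint i).aestronglyMeasurable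
      calc ∫ ω, ∏ j ∈ Finset.cons i s hi, g j ω ∂μ
          = ∫ ω, ((∏ j ∈ s, g j) * g i) ω ∂μ := by rw [show (fun ω => ∏ j ∈ Finset.cons i s hi, g j ω) = fun ω => ((∏ j ∈ s, g j) * g i) ω from hEq]
        _ = (∫ ω, (∏ j ∈ s, g j) ω ∂μ) * (∫ ω, g i ω ∂μ) := h2
        _ = (∏ j ∈ s, ∫ ω, g j ω ∂μ) * (∫ ω, g i ω ∂μ) := by rw [← hfun]; rw [ih.2]
        _ = ∏ j ∈ Finset.cons i s hi, ∫ ω, g j ω ∂μ := by rw [Finset.prod_cons, mul_comm]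

lemma aux_exp_tsum (x : ℝ) : Real.exp x = ∑' n : ℕ, x ^ n / (n !) := by
  rw [Real.exp_eq_exp_ℝ, NormedSpace.exp_eq_tsum_div]

lemma aux_pow_self_le (m : ℕ) : (m : ℝ) ^ m ≤ Real.exp m * (m !) := by
  have hs := Real.summable_pow_div_factorial (m : ℝ)
  have h := Summable.le_tsum hs m (fun k _ => by positivity)
  rw [← aux_exp_tsum] at h
  have hm : (0:ℝ) < m ! := by positivity
  calc (m:ℝ)^m = ((m:ℝ)^m / m !) * m ! := by field_simp
    _ ≤ Real.exp m * (m !) := by nlinarith [Real.exp_pos (m:ℝ)]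

lemma aux_sqrt_pow_le {z : ℝ} (hz : 0 ≤ z) (j : ℕ) :
    (Real.sqrt z) ^ j ≤ 1 + z ^ ((j+1)/2) := by
  rcases le_total (Real.sqrt z) 1 with h | h
  · have : (Real.sqrt z)^j ≤ 1 := pow_le_one₀ (Real.sqrt_nonneg z) h
    nlinarith [pow_nonneg hz ((j+1)/2)]
  · have hj : j ≤ 2 * ((j+1)/2) := by omega
    have h1 : (Real.sqrt z)^j ≤ (Real.sqrt z)^(2*((j+1)/2)) := pow_le_pow_right₀ h hj
    have h2 : (Real.sqrt z)^(2*((j+1)/2)) = z ^ ((j+1)/2) := by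
      rw [pow_mul, Real.sq_sqrt hz]
    nlinarith [h1, h2.le]

theorem stmt_16 {Ω : Type*} [MeasurableSpace Ω] (μ : Measure Ω) [IsProbabilityMeasure μ]
    (n : ℕ) (hn : 1 ≤ n) (ξ : Fin n → Ω → ℝ)
    (hmeas : ∀ i, Measurable (ξ i))
    (hindep : iIndepFun (m := fun _ => Real.measurableSpace) ξ μ)
    (hnonneg : ∀ i, ∀ᵐ ω ∂μ, 0 ≤ ξ i ω)
    (hint : ∀ i, ∀ k : ℕ, 0 < k → Integrable (fun ω => ξ i ω ^ k) μ)
    (a : Fin n → ℝ) (ha : ∀ i, 0 < a i) (hsum : ∑ i, a i ≤ 2)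
    (hgrowth : ∀ i, ∃ C > 0, ∀ k : ℕ, 0 < k →
      ∫ ω, ξ i ω ^ k ∂μ ≤ C * (k : ℝ) ^ (a i * k)) :
    (∃ C > 0, ∀ k : ℕ, 0 < k →
      ∫ ω, (∏ i, ξ i ω) ^ k ∂μ ≤ C * (k : ℝ) ^ (2 * (k : ℝ))) ∧
    (∃ c > 0, Integrable (fun ω => Real.exp (c * Real.sqrt (∏ i, ξ i ω))) μ) := by
  classical
  -- moments of the product
  have key : ∀ k : ℕ, 0 < k →
      Integrable (fun ω => (∏ i, ξ i ω) ^ k) μ ∧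
      ∫ ω, (∏ i, ξ i ω) ^ k ∂μ = ∏ i, ∫ ω, ξ i ω ^ k ∂μ := by
    intro k hk
    have hindep' : iIndepFun (m := fun _ => Real.measurableSpace) (fun i ω => ξ i ω ^ k) μ :=
      hindep.comp (fun _ x => x ^ k) (fun _ => measurable_id.pow_const k)
    have hmeas' : ∀ i, Measurable (fun ω => ξ i ω ^ k) := fun i => (hmeas i).pow_const k
    have H := aux_prod_int μ (fun i ω => ξ i ω ^ k) hmeas' hindep'
      (fun i => hint i k hk) Finset.univ
    constructor
    · have := H.1
      simpa [Finset.prod_pow] using this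
    · have := H.2
      simpa [Finset.prod_pow] using this
  choose D hDpos hD using hgrowth
  set C : ℝ := ∏ i, D i with hCdef
  have hCpos : 0 < C := Finset.prod_pos fun i _ => hDpos i
  have part1 : ∀ k : ℕ, 0 < k →
      ∫ ω, (∏ i, ξ i ω) ^ k ∂μ ≤ C * (k : ℝ) ^ (2 * (k : ℝ)) := by
    intro k hk
    have hk1 : (1:ℝ) ≤ k := by exact_mod_cast hk
    have hk0 : (0:ℝ) < k := by linarith
    have hmom_nonneg : ∀ i : Fin n, 0 ≤ ∫ ω, ξ i ω ^ k ∂μ := fun i =>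
      integral_nonneg_of_ae ((hnonneg i).mono fun ω hω => pow_nonneg hω k)
    calc ∫ ω, (∏ i, ξ i ω) ^ k ∂μ = ∏ i, ∫ ω, ξ i ω ^ k ∂μ := (key k hk).2
      _ ≤ ∏ i, D i * (k : ℝ) ^ (a i * k) :=
          Finset.prod_le_prod (fun i _ => hmom_nonneg i) (fun i _ => hD i k hk)
      _ = C * ∏ i, (k : ℝ) ^ (a i * k) := by rw [Finset.prod_mul_distrib]
      _ = C * (k : ℝ) ^ (∑ i, a i * k) := by
          congr 1
          calc ∏ i, (k : ℝ) ^ (a i * k) = ∏ i, Real.exp (Real.log k * (a i * k)) := by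
                simp_rw [Real.rpow_def_of_pos hk0]
            _ = Real.exp (∑ i, Real.log k * (a i * k)) := (Real.exp_sum _ _).symm
            _ = (k : ℝ) ^ (∑ i, a i * k) := by
                rw [Real.rpow_def_of_pos hk0, Finset.mul_sum]
      _ ≤ C * (k : ℝ) ^ (2 * (k : ℝ)) := by
          apply mul_le_mul_of_nonneg_left _ hCpos.le
          apply Real.rpow_le_rpow_of_exponent_le hk1
          rw [← Finset.sum_mul]
          have : (∑ i, a i) * (k:ℝ) ≤ 2 * k := by nlinarith
          exact this
  refine ⟨⟨C, hCpos, part1⟩, ?_⟩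
  -- Part 2
  set c : ℝ := 3⁻¹ with hc
  have hcpos : (0:ℝ) < c := by norm_num
  have hce : c * Real.exp 1 < 1 := by
    have := Real.exp_one_lt_d9
    rw [hc]; nlinarith
  have hce0 : 0 ≤ c * Real.exp 1 := by positivity
  refine ⟨c, hcpos, ?_⟩
  set P : Ω → ℝ := fun ω => ∏ i, ξ i ω with hPdef
  have hPmeas : Measurable P := Finset.measurable_prod _ fun i _ => hmeas i
  have hPnonneg : ∀ᵐ ω ∂μ, 0 ≤ P ω := by
    have := (ae_all_iff.2 hnonneg)
    filter_upwards [this] with ω hω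
    exact Finset.prod_nonneg fun i _ => hω i
  -- measurability of the target function
  have hfmeas : Measurable (fun ω => Real.exp (c * Real.sqrt (P ω))) :=
    Real.measurable_exp.comp ((measurable_const.mul (Real.continuous_sqrt.measurable.comp hPmeas)))
  constructor
  · exact hfmeas.aestronglyMeasurable
  · rw [hasFiniteIntegral_iff_ofReal (Filter.Eventually.of_forall fun ω => (Real.exp_pos _).le)]
    -- expand exp as a series
    have hptw : ∀ ω, ENNReal.ofReal (Real.exp (c * Real.sqrt (P ω)))
        = ∑' j : ℕ, ENNReal.ofReal ((c * Real.sqrt (P ω)) ^ j / (Nat.factorial j)) := by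
      intro ω
      rw [aux_exp_tsum]
      exact ENNReal.ofReal_tsum_of_nonneg
        (fun j => by positivity) (Real.summable_pow_div_factorial _)
    have hmeasj : ∀ j : ℕ, Measurable (fun ω =>
        ENNReal.ofReal ((c * Real.sqrt (P ω)) ^ j / (Nat.factorial j))) := fun j =>
      ENNReal.measurable_ofReal.comp
        (((measurable_const.mul (Real.continuous_sqrt.measurable.comp hPmeas)).pow_const j).div_const _)
    calc ∫⁻ ω, ENNReal.ofReal (Real.exp (c * Real.sqrt (P ω))) ∂μ
        = ∫⁻ ω, ∑' j : ℕ, ENNReal.ofReal ((c * Real.sqrt (P ω)) ^ j / (Nat.factorial j)) ∂μ := by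
          exact lintegral_congr fun ω => hptw ω
      _ = ∑' j : ℕ, ∫⁻ ω, ENNReal.ofReal ((c * Real.sqrt (P ω)) ^ j / (Nat.factorial j)) ∂μ :=
          lintegral_tsum fun j => (hmeasj j).aemeasurable
      _ ≤ ∑' j : ℕ, ENNReal.ofReal (c ^ j / (Nat.factorial j : ℝ)
            + (C * Real.exp 1) * (((j:ℝ)+1) * (c * Real.exp 1) ^ j)) := by
          apply ENNReal.tsum_le_tsum
          intro j
          rcases Nat.eq_zero_or_pos j with rfl | hj
          · have h1 : ∀ ω : Ω, ((c * Real.sqrt (P ω)) ^ 0 / ((Nat.factorial 0 : ℕ) : ℝ)) = 1 := by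
              intro ω; simp
            simp only [h1]
            rw [lintegral_const, measure_univ, mul_one]
            apply ENNReal.ofReal_le_ofReal
            have := Real.exp_pos 1
            simp only [pow_zero, Nat.factorial_zero, Nat.cast_one, div_one, Nat.cast_zero,
              zero_add, mul_one, one_mul]
            nlinarith [hCpos]
          · set m := (j+1)/2 with hm
            have hm1 : 0 < m := by omega
            have h2m : 2 * m ≤ j + 1 := by omega
            have hintm : Integrable (fun ω => P ω ^ m) μ := (key m hm1).1
            have hPmnn : 0 ≤ᵐ[μ] fun ω => P ω ^ m :=
              hPnonneg.mono fun ω hω => pow_nonneg hω m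
            have hjfac : (0:ℝ) < (Nat.factorial j : ℝ) := by
              exact_mod_cast Nat.factorial_pos j
            have hcj : (0:ℝ) ≤ c ^ j / (Nat.factorial j : ℝ) := by positivity
            -- real bound on the m-th moment
            have hr1 : (m:ℝ) ^ (2*(m:ℝ)) ≤ Real.exp 1 ^ (j+1) * (Nat.factorial (j+1) : ℝ) := by
              have e1 : (m:ℝ) ^ (2*(m:ℝ)) = ((m:ℝ) ^ (m:ℕ)) ^ 2 := by
                rw [show (2*(m:ℝ)) = ((2*m : ℕ) : ℝ) by push_cast; ring,
                  Real.rpow_natCast, mul_comm 2 m, pow_mul]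
              have e2 : ((m:ℝ) ^ (m:ℕ)) ^ 2 ≤ (Real.exp m * (Nat.factorial m : ℝ)) ^ 2 := by
                apply pow_le_pow_left₀ (by positivity) (aux_pow_self_le m)
              have e3 : (Real.exp m * (Nat.factorial m : ℝ)) ^ 2
                  = Real.exp 1 ^ (2*m) * ((Nat.factorial m * Nat.factorial m : ℕ) : ℝ) := by
                have : Real.exp (m:ℝ) = Real.exp 1 ^ m := by
                  rw [← Real.exp_nat_mul, mul_one]
                rw [this]
                push_cast
                rw [show 2*m = m + m by ring, pow_add]
                ring
              have e4 : ((Nat.factorial m * Nat.factorial m : ℕ) : ℝ) ≤ (Nat.factorial (j+1) : ℝ) := by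
                have hd := Nat.le_of_dvd (Nat.factorial_pos (m+m))
                  (Nat.factorial_mul_factorial_dvd_factorial_add m m)
                have hle := Nat.factorial_le (show m + m ≤ j + 1 by omega)
                exact_mod_cast hd.trans hle
              have e5 : Real.exp 1 ^ (2*m) ≤ Real.exp 1 ^ (j+1) :=
                pow_le_pow_right₀ (Real.one_le_exp zero_le_one) h2m
              calc (m:ℝ) ^ (2*(m:ℝ)) = ((m:ℝ) ^ (m:ℕ)) ^ 2 := e1
                _ ≤ (Real.exp m * (Nat.factorial m : ℝ)) ^ 2 := e2
                _ = Real.exp 1 ^ (2*m) * ((Nat.factorial m * Nat.factorial m : ℕ) : ℝ) := e3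
                _ ≤ Real.exp 1 ^ (j+1) * (Nat.factorial (j+1) : ℝ) := by
                    apply mul_le_mul e5 e4 (by positivity) (by positivity)
            have hmom : ∫ ω, P ω ^ m ∂μ ≤ C * (Real.exp 1 ^ (j+1) * (Nat.factorial (j+1) : ℝ)) := by
              refine (part1 m hm1).trans ?_
              exact mul_le_mul_of_nonneg_left hr1 hCpos.le
            -- pointwise bound
            have hptb : ∀ᵐ ω ∂μ, ENNReal.ofReal ((c * Real.sqrt (P ω)) ^ j / (Nat.factorial j : ℝ))
                ≤ ENNReal.ofReal (c^j / (Nat.factorial j : ℝ))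
                  + ENNReal.ofReal (c^j / (Nat.factorial j : ℝ)) * ENNReal.ofReal (P ω ^ m) := by
              filter_upwards [hPnonneg] with ω hω
              have h2 : (Real.sqrt (P ω))^j ≤ 1 + P ω ^ m := aux_sqrt_pow_le hω j
              calc ENNReal.ofReal ((c * Real.sqrt (P ω)) ^ j / (Nat.factorial j : ℝ))
                  = ENNReal.ofReal ((c^j / (Nat.factorial j : ℝ)) * (Real.sqrt (P ω))^j) := by
                    rw [mul_pow]; ring_nf
                _ ≤ ENNReal.ofReal ((c^j / (Nat.factorial j : ℝ)) * (1 + P ω ^ m)) := by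
                    apply ENNReal.ofReal_le_ofReal
                    exact mul_le_mul_of_nonneg_left h2 hcj
                _ = ENNReal.ofReal (c^j / (Nat.factorial j : ℝ)
                      + (c^j / (Nat.factorial j : ℝ)) * P ω ^ m) := by ring_nf
                _ ≤ ENNReal.ofReal (c^j / (Nat.factorial j : ℝ))
                      + ENNReal.ofReal ((c^j / (Nat.factorial j : ℝ)) * P ω ^ m) :=
                      ENNReal.ofReal_add_le
                _ = ENNReal.ofReal (c^j / (Nat.factorial j : ℝ))
                      + ENNReal.ofReal (c^j / (Nat.factorial j : ℝ)) * ENNReal.ofReal (P ω ^ m) := by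
                      rw [ENNReal.ofReal_mul hcj]
            have hmeasPm : Measurable (fun ω => ENNReal.ofReal (P ω ^ m)) :=
              ENNReal.measurable_ofReal.comp (hPmeas.pow_const m)
            calc ∫⁻ ω, ENNReal.ofReal ((c * Real.sqrt (P ω)) ^ j / (Nat.factorial j : ℝ)) ∂μ
                ≤ ∫⁻ ω, (ENNReal.ofReal (c^j / (Nat.factorial j : ℝ))
                    + ENNReal.ofReal (c^j / (Nat.factorial j : ℝ)) * ENNReal.ofReal (P ω ^ m)) ∂μ :=
                  lintegral_mono_ae hptb
              _ = ENNReal.ofReal (c^j / (Nat.factorial j : ℝ))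
                    + ENNReal.ofReal (c^j / (Nat.factorial j : ℝ)) * ∫⁻ ω, ENNReal.ofReal (P ω ^ m) ∂μ := by
                  rw [lintegral_add_left measurable_const, lintegral_const, measure_univ, mul_one,
                    lintegral_const_mul _ hmeasPm]
              _ = ENNReal.ofReal (c^j / (Nat.factorial j : ℝ))
                    + ENNReal.ofReal (c^j / (Nat.factorial j : ℝ)) * ENNReal.ofReal (∫ ω, P ω ^ m ∂μ) := by
                  rw [ofReal_integral_eq_lintegral_ofReal hintm hPmnn]
              _ ≤ ENNReal.ofReal (c^j / (Nat.factorial j : ℝ))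
                    + ENNReal.ofReal (c^j / (Nat.factorial j : ℝ))
                      * ENNReal.ofReal (C * (Real.exp 1 ^ (j+1) * (Nat.factorial (j+1) : ℝ))) := by
                  gcongr
              _ = ENNReal.ofReal (c^j / (Nat.factorial j : ℝ))
                    + ENNReal.ofReal ((C * Real.exp 1) * (((j:ℝ)+1) * (c * Real.exp 1) ^ j)) := by
                  rw [← ENNReal.ofReal_mul hcj]
                  congr 1
                  have hfact : ((Nat.factorial (j+1) : ℕ) : ℝ) = ((j:ℝ)+1) * (Nat.factorial j : ℝ) := by
                    rw [Nat.factorial_succ]; push_cast; ring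
                  rw [hfact, pow_succ, mul_pow]
                  field_simp
              _ ≤ ENNReal.ofReal (c ^ j / (Nat.factorial j : ℝ)
                    + (C * Real.exp 1) * (((j:ℝ)+1) * (c * Real.exp 1) ^ j)) := by
                  rw [ENNReal.ofReal_add hcj (by positivity)]
      _ = ENNReal.ofReal (∑' j : ℕ, (c ^ j / (Nat.factorial j : ℝ)
            + (C * Real.exp 1) * (((j:ℝ)+1) * (c * Real.exp 1) ^ j))) := by
          have hgeo : Summable (fun j : ℕ => ((j:ℝ)+1) * (c * Real.exp 1) ^ j) := by
            have hnorm : ‖c * Real.exp 1‖ < 1 := by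
              rwa [Real.norm_eq_abs, abs_of_nonneg hce0]
            have h1 := summable_pow_mul_geometric_of_norm_lt_one 1 hnorm
            have h2 := summable_geometric_of_norm_lt_one hnorm
            simpa [pow_one, add_mul, one_mul] using h1.add h2
          have hBsum : Summable (fun j : ℕ => c ^ j / (Nat.factorial j : ℝ)
              + (C * Real.exp 1) * (((j:ℝ)+1) * (c * Real.exp 1) ^ j)) :=
            (Real.summable_pow_div_factorial c).add (hgeo.mul_left _)
          have hBnn : ∀ j : ℕ, 0 ≤ c ^ j / (Nat.factorial j : ℝ)
              + (C * Real.exp 1) * (((j:ℝ)+1) * (c * Real.exp 1) ^ j) := by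
            intro j
            have h1 : (0:ℝ) ≤ c ^ j / (Nat.factorial j : ℝ) := by positivity
            have h2 : (0:ℝ) ≤ (C * Real.exp 1) * (((j:ℝ)+1) * (c * Real.exp 1) ^ j) :=
              mul_nonneg (mul_nonneg hCpos.le (Real.exp_pos 1).le)
                (mul_nonneg (by positivity) (pow_nonneg hce0 j))
            exact add_nonneg h1 h2
          exact (ENNReal.ofReal_tsum_of_nonneg hBnn hBsum).symm
      _ < ⊤ := ENNReal.ofReal_lt_top
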